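/- For every r with 1/2 < r ≤ 1 and every x with 0 < x ≤ 1/(√2·π), the tail of the cosine series is approximated by the corresponding integral: | Σ_{k > 1/(4x), k∈ℕ} k^{−2r} cos(2πkx) − ∫_{1/(4x)}^∞ z^{−2r} cos(2πxz) dz | ≤ (π + 4r) · ( Σ_{k=1}^∞ k^{−2r} ) · x. -/

import Mathlib

open MeasureTheory
open scoped ENNReal NNReal

private lemma absIntLe (b k : ℝ) (hbk : b ≤ k) (hk : k ≤ b + 1) :
    ∫ z in Set.Ioc b (b + 1), |z - k| ≤ 1 / 2 := by
  have hb1 : b ≤ b + 1 := by linarith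
  have hcont : ∀ u v : ℝ, IntervalIntegrable (fun z : ℝ => |z - k|) volume u v :=
    fun u v => (continuous_abs.comp (continuous_id.sub continuous_const)).intervalIntegrable u v
  rw [← intervalIntegral.integral_of_le hb1,
    ← intervalIntegral.integral_add_adjacent_intervals (hcont b k) (hcont k (b + 1))]
  have h1 : (∫ z in b..k, |z - k|) = ∫ z in b..k, (k - z) := by
    apply intervalIntegral.integral_congr
    intro z hz
    rw [Set.uIcc_of_le hbk] at hz
    show |z - k| = k - z
    rw [abs_of_nonpos (by linarith [hz.2])]
    ring
  have h2 : (∫ z in k..(b + 1), |z - k|) = ∫ z in k..(b + 1), (z - k) := by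
    apply intervalIntegral.integral_congr
    intro z hz
    rw [Set.uIcc_of_le hk] at hz
    show |z - k| = z - k
    rw [abs_of_nonneg (by linarith [hz.1])]
  rw [h1, h2]
  have e1 : (∫ z in b..k, (k - z)) = (k - b) * k - (k ^ 2 - b ^ 2) / 2 := by
    rw [intervalIntegral.integral_sub intervalIntegrable_const
      intervalIntegral.intervalIntegrable_id]
    simp [integral_id, smul_eq_mul]
  have e2 : (∫ z in k..(b + 1), (z - k)) = ((b + 1) ^ 2 - k ^ 2) / 2 - (b + 1 - k) * k := by
    rw [intervalIntegral.integral_sub intervalIntegral.intervalIntegrable_id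
      intervalIntegrable_const]
    simp [integral_id, smul_eq_mul]
  rw [e1, e2]
  nlinarith [mul_nonneg (sub_nonneg.2 hbk) (sub_nonneg.2 hk)]

private lemma hasDerivAtF (p c z : ℝ) (hz : z ≠ 0) :
    HasDerivAt (fun z : ℝ => z ^ p * Real.cos (c * z))
      (p * z ^ (p - 1) * Real.cos (c * z) + z ^ p * (-Real.sin (c * z) * c)) z := by
  have h1 : HasDerivAt (fun z : ℝ => c * z) c z := by
    simpa using (hasDerivAt_id z).const_mul c
  have h2 : HasDerivAt (fun z : ℝ => Real.cos (c * z)) (-Real.sin (c * z) * c) z :=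
    (Real.hasDerivAt_cos (c * z)).comp z h1
  exact (Real.hasDerivAt_rpow_const (Or.inl hz)).mul h2

set_option maxHeartbeats 2000000 in
theorem stmt16 (r : ℝ) (hr1 : 1/2 < r) (hr2 : r ≤ 1)
    (x : ℝ) (hx : 0 < x) (hx2 : x ≤ 1 / (Real.sqrt 2 * Real.pi)) :
    |(∑' k : ℕ, if 1 / (4 * x) < (k : ℝ) then
          (k : ℝ) ^ (-(2 * r)) * Real.cos (2 * Real.pi * (k : ℝ) * x) else 0)
        - ∫ z in Set.Ioi (1 / (4 * x)), z ^ (-(2 * r)) * Real.cos (2 * Real.pi * x * z)|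
      ≤ (Real.pi + 4 * r) * (∑' k : ℕ, ((k : ℝ) + 1) ^ (-(2 * r))) * x := by
  have hπ := Real.pi_pos
  have hp : -(2 * r) < -1 := by linarith
  have hpneg : -(2 * r) ≤ 0 := by linarith
  set a : ℝ := 1 / (4 * x) with ha_def
  set f : ℝ → ℝ := fun z => z ^ (-(2 * r)) * Real.cos (2 * Real.pi * x * z) with hf_def
  have hx4 : 0 < 4 * x := by linarith
  have hsqrt2 : (1.4 : ℝ) < Real.sqrt 2 := by
    have : ((1.4 : ℝ)) ^ 2 < 2 := by norm_num
    nlinarith [Real.sq_sqrt (by norm_num : (2:ℝ) ≥ 0), Real.sqrt_nonneg 2]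
  have hx14 : x < 1 / 4 := by
    have h4 : (4:ℝ) < Real.sqrt 2 * Real.pi := by nlinarith [Real.pi_gt_d6]
    calc x ≤ 1 / (Real.sqrt 2 * Real.pi) := hx2
    _ < 1 / 4 := by apply one_div_lt_one_div_of_lt <;> linarith
  have ha1 : 1 < a := by rw [ha_def, lt_div_iff₀ hx4]; linarith
  have ha0 : 0 < a := by linarith
  have hainv : a⁻¹ = 4 * x := by rw [ha_def]; field_simp
  set m : ℕ := ⌊a⌋₊ with hm_def
  have hma : (m : ℝ) ≤ a := Nat.floor_le ha0.le
  have ham : a < m + 1 := Nat.lt_floor_add_one a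
  -- summability of the zeta-like series
  have hZsum : Summable (fun j : ℕ => ((j : ℝ) + 1) ^ (-(2 * r))) := by
    refine ((summable_nat_add_iff 1).2 (Real.summable_nat_rpow.2 hp)).congr fun n => ?_
    push_cast
    norm_num
  set g : ℕ → ℝ := fun k => if a < (k : ℝ) then
      (k : ℝ) ^ (-(2 * r)) * Real.cos (2 * Real.pi * (k : ℝ) * x) else 0 with hg_def
  have hgsum : Summable g := by
    apply Summable.of_norm_bounded (Real.summable_nat_rpow.2 hp)
    intro k
    by_cases hk : a < (k : ℝ)
    · simp only [hg_def, if_pos hk, norm_mul, Real.norm_eq_abs]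
      rw [abs_of_nonneg (Real.rpow_nonneg (Nat.cast_nonneg k) _)]
      calc (k : ℝ) ^ (-(2 * r)) * |Real.cos (2 * Real.pi * (k : ℝ) * x)|
          ≤ (k : ℝ) ^ (-(2 * r)) * 1 := by
            apply mul_le_mul_of_nonneg_left (Real.abs_cos_le_one _)
              (Real.rpow_nonneg (Nat.cast_nonneg k) _)
      _ = (k : ℝ) ^ (-(2 * r)) := mul_one _
    · simp only [hg_def, if_neg hk, norm_zero]
      exact Real.rpow_nonneg (Nat.cast_nonneg k) _
  -- rewrite the series as a sum over shifted indices
  have hgF : ∀ j : ℕ, g (j + (m + 1)) = f ((m : ℝ) + 1 + (j : ℝ)) := by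
    intro j
    have hc : a < ((j + (m + 1) : ℕ) : ℝ) := by
      push_cast
      have : (0:ℝ) ≤ (j:ℝ) := Nat.cast_nonneg j
      linarith
    simp only [hg_def, if_pos hc, hf_def]
    push_cast
    ring_nf
  have hA : (∑' k : ℕ, g k) = ∑' j : ℕ, f ((m : ℝ) + 1 + (j : ℝ)) := by
    rw [← Summable.sum_add_tsum_nat_add (m + 1) hgsum]
    have hzero : ∀ i ∈ Finset.range (m + 1), g i = 0 := by
      intro i hi
      have hi' : i ≤ m := Nat.lt_succ_iff.1 (Finset.mem_range.1 hi)
      have : ¬ a < (i : ℝ) := by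
        push_neg
        calc (i : ℝ) ≤ (m : ℝ) := by exact_mod_cast hi'
        _ ≤ a := hma
      simp [hg_def, this]
    rw [Finset.sum_eq_zero hzero, zero_add]
    exact tsum_congr hgF
  -- integrability of f on Ioi a
  have hfint : IntegrableOn f (Set.Ioi a) := by
    apply Integrable.mono' (integrableOn_Ioi_rpow_of_lt hp ha0)
    · apply ContinuousOn.aestronglyMeasurable _ measurableSet_Ioi
      apply ContinuousOn.mul
      · exact ContinuousOn.rpow_const continuousOn_id
          (fun z hz => Or.inl (ne_of_gt (lt_trans ha0 hz)))
      · exact (Real.continuous_cos.comp (continuous_const.mul continuous_id)).continuousOn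
    · filter_upwards [self_mem_ae_restrict measurableSet_Ioi] with z hz
      have hz0 : 0 < z := lt_trans ha0 hz
      simp only [hf_def, norm_mul, Real.norm_eq_abs]
      rw [abs_of_nonneg (Real.rpow_nonneg hz0.le _)]
      calc z ^ (-(2 * r)) * |Real.cos (2 * Real.pi * x * z)|
          ≤ z ^ (-(2 * r)) * 1 :=
            mul_le_mul_of_nonneg_left (Real.abs_cos_le_one _) (Real.rpow_nonneg hz0.le _)
      _ = z ^ (-(2 * r)) := mul_one _
  -- the union decomposition
  have hU : Set.Ioi a = ⋃ j : ℕ, Set.Ioc (a + (j : ℝ)) (a + (j : ℝ) + 1) := by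
    ext z
    simp only [Set.mem_Ioi, Set.mem_iUnion, Set.mem_Ioc]
    constructor
    · intro hz
      have hzpos : 0 < z - a := by linarith
      set n : ℕ := ⌈z - a⌉₊ with hn_def
      have hn1 : 1 ≤ n := Nat.one_le_ceil_iff.2 hzpos
      refine ⟨n - 1, ?_, ?_⟩
      · have h1 : ((n - 1 : ℕ) : ℝ) < z - a := Nat.lt_ceil.1 (by omega)
        linarith
      · have h2 : z - a ≤ (n : ℝ) := Nat.le_ceil _
        have h3 : ((n - 1 : ℕ) : ℝ) = (n : ℝ) - 1 := by
          push_cast [Nat.cast_sub hn1]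
          ring
        linarith
    · rintro ⟨j, hj1, hj2⟩
      have : (0:ℝ) ≤ (j : ℝ) := Nat.cast_nonneg j
      linarith
  have hdisj : Pairwise (Function.onFun Disjoint fun j : ℕ => Set.Ioc (a + (j : ℝ)) (a + (j : ℝ) + 1)) := by
    intro i j hij
    simp only [Function.onFun]
    rw [Set.Ioc_disjoint_Ioc]
    rcases Nat.lt_or_ge i j with h | h
    · have : (i : ℝ) + 1 ≤ (j : ℝ) := by exact_mod_cast h
      exact min_le_of_left_le (le_max_of_le_right (by linarith))
    · have hji : j < i := lt_of_le_of_ne h (Ne.symm hij)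
      have : (j : ℝ) + 1 ≤ (i : ℝ) := by exact_mod_cast hji
      exact min_le_of_right_le (le_max_of_le_left (by linarith))
  have hhs_int : HasSum (fun j : ℕ => ∫ z in Set.Ioc (a + (j : ℝ)) (a + (j : ℝ) + 1), f z)
      (∫ z in Set.Ioi a, f z) := by
    have h := hasSum_integral_iUnion (μ := volume) (f := f)
      (s := fun j : ℕ => Set.Ioc (a + (j : ℝ)) (a + (j : ℝ) + 1))
      (fun j => measurableSet_Ioc) hdisj (by rw [← hU]; exact hfint)
    rwa [← hU] at h
  -- per-index estimate
  have hest : ∀ j : ℕ, |f ((m : ℝ) + 1 + (j : ℝ))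
      - ∫ z in Set.Ioc (a + (j : ℝ)) (a + (j : ℝ) + 1), f z|
      ≤ (Real.pi + 4 * r) * x * ((j : ℝ) + 1) ^ (-(2 * r)) := by
    intro j
    set b : ℝ := a + (j : ℝ) with hb_def
    set k : ℝ := (m : ℝ) + 1 + (j : ℝ) with hk_def
    have hjnn : (0:ℝ) ≤ (j : ℝ) := Nat.cast_nonneg j
    have hjb : (1 : ℝ) + (j : ℝ) ≤ b := by rw [hb_def]; linarith
    have hb0 : 0 < b := by linarith
    have hbk : b < k := by rw [hb_def, hk_def]; linarith
    have hkb1 : k ≤ b + 1 := by rw [hb_def, hk_def]; linarith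
    set C : ℝ := (2 * Real.pi + 8 * r) * x * ((j : ℝ) + 1) ^ (-(2 * r)) with hC_def
    have hj1pos : (0:ℝ) < (j : ℝ) + 1 := by linarith
    have hcoef : (0:ℝ) ≤ (2 * Real.pi + 8 * r) * x := by
      apply mul_nonneg (by linarith) hx.le
    have hCnn : 0 ≤ C := by
      rw [hC_def]
      exact mul_nonneg hcoef (Real.rpow_nonneg hj1pos.le _)
    -- derivative bound on Icc b (b+1)
    have hderiv_bound : ∀ z ∈ Set.Icc b (b + 1),
        ‖(-(2 * r)) * z ^ ((-(2 * r)) - 1) * Real.cos (2 * Real.pi * x * z)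
          + z ^ (-(2 * r)) * (-Real.sin (2 * Real.pi * x * z) * (2 * Real.pi * x))‖ ≤ C := by
      intro z hz
      have hza : a ≤ z := le_trans (by rw [hb_def]; linarith) hz.1
      have hz0 : 0 < z := lt_of_lt_of_le ha0 hza
      have hzinv : z⁻¹ ≤ 4 * x := by
        rw [← hainv]
        exact inv_anti₀ ha0 hza
      have hzp0 : 0 ≤ z ^ (-(2 * r)) := Real.rpow_nonneg hz0.le _
      have hzp : z ^ (-(2 * r)) ≤ ((j : ℝ) + 1) ^ (-(2 * r)) := by
        apply Real.rpow_le_rpow_of_nonpos hj1pos _ hpneg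
        linarith [hz.1]
      have hsplit : z ^ ((-(2 * r)) - 1) = z ^ (-(2 * r)) * z⁻¹ := by
        rw [← Real.rpow_neg_one z, ← Real.rpow_add hz0]
        ring_nf
      have h1 : |(-(2 * r)) * z ^ ((-(2 * r)) - 1) * Real.cos (2 * Real.pi * x * z)|
          ≤ 2 * r * (z ^ (-(2 * r)) * (4 * x)) := by
        rw [abs_mul, abs_mul, abs_neg, abs_of_pos (by linarith : (0:ℝ) < 2 * r),
          abs_of_nonneg (Real.rpow_nonneg hz0.le _)]
        have hcos := Real.abs_cos_le_one (2 * Real.pi * x * z)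
        have hA : z ^ ((-(2 * r)) - 1) ≤ z ^ (-(2 * r)) * (4 * x) := by
          rw [hsplit]
          exact mul_le_mul_of_nonneg_left hzinv hzp0
        have hApos : 0 ≤ z ^ ((-(2 * r)) - 1) := Real.rpow_nonneg hz0.le _
        nlinarith [mul_le_mul_of_nonneg_left hcos (mul_nonneg (by linarith : (0:ℝ) ≤ 2 * r) hApos),
          mul_le_mul_of_nonneg_left hA (by linarith : (0:ℝ) ≤ 2 * r),
          abs_nonneg (Real.cos (2 * Real.pi * x * z))]
      have h2 : |z ^ (-(2 * r)) * (-Real.sin (2 * Real.pi * x * z) * (2 * Real.pi * x))|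
          ≤ z ^ (-(2 * r)) * (2 * Real.pi * x) := by
        rw [abs_mul, abs_of_nonneg hzp0, abs_mul, abs_neg,
          abs_of_pos (by positivity : (0:ℝ) < 2 * Real.pi * x)]
        have hsin := Real.abs_sin_le_one (2 * Real.pi * x * z)
        nlinarith [mul_le_mul_of_nonneg_left
          (mul_le_mul_of_nonneg_right hsin (by positivity : (0:ℝ) ≤ 2 * Real.pi * x)) hzp0,
          abs_nonneg (Real.sin (2 * Real.pi * x * z))]
      have h3 : (2 * Real.pi + 8 * r) * x * (z ^ (-(2 * r)))
          ≤ (2 * Real.pi + 8 * r) * x * (((j : ℝ) + 1) ^ (-(2 * r))) :=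
        mul_le_mul_of_nonneg_left hzp hcoef
      rw [Real.norm_eq_abs]
      calc |(-(2 * r)) * z ^ ((-(2 * r)) - 1) * Real.cos (2 * Real.pi * x * z)
          + z ^ (-(2 * r)) * (-Real.sin (2 * Real.pi * x * z) * (2 * Real.pi * x))|
          ≤ |(-(2 * r)) * z ^ ((-(2 * r)) - 1) * Real.cos (2 * Real.pi * x * z)|
            + |z ^ (-(2 * r)) * (-Real.sin (2 * Real.pi * x * z) * (2 * Real.pi * x))| :=
            abs_add_le _ _
        _ ≤ 2 * r * (z ^ (-(2 * r)) * (4 * x)) + z ^ (-(2 * r)) * (2 * Real.pi * x) :=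
            add_le_add h1 h2
        _ = (2 * Real.pi + 8 * r) * x * (z ^ (-(2 * r))) := by ring
        _ ≤ (2 * Real.pi + 8 * r) * x * (((j : ℝ) + 1) ^ (-(2 * r))) := h3
        _ = C := hC_def.symm
    -- Lipschitz estimate
    have hkmem : k ∈ Set.Icc b (b + 1) := ⟨hbk.le, hkb1⟩
    have hlip : ∀ z ∈ Set.Icc b (b + 1), |f z - f k| ≤ C * |z - k| := by
      intro z hz
      have := Convex.norm_image_sub_le_of_norm_hasDerivWithin_le
        (f := f)
        (f' := fun z => (-(2 * r)) * z ^ ((-(2 * r)) - 1) * Real.cos (2 * Real.pi * x * z)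
          + z ^ (-(2 * r)) * (-Real.sin (2 * Real.pi * x * z) * (2 * Real.pi * x)))
        (s := Set.Icc b (b + 1))
        (fun z hz => (hasDerivAtF (-(2 * r)) (2 * Real.pi * x) z
          (ne_of_gt (lt_of_lt_of_le hb0 hz.1))).hasDerivWithinAt)
        hderiv_bound (convex_Icc _ _) hkmem hz
      simpa [Real.norm_eq_abs] using this
    -- integral estimates
    have hsub : Set.Ioc b (b + 1) ⊆ Set.Ioi a := by
      intro z hz
      have : b < z := hz.1
      have hab : a ≤ b := by rw [hb_def]; linarith
      exact lt_of_le_of_lt hab this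
    have hfI : IntegrableOn f (Set.Ioc b (b + 1)) := hfint.mono_set hsub
    have hμ : volume (Set.Ioc b (b + 1)) = 1 := by
      rw [Real.volume_Ioc]
      norm_num
    have hconstI : IntegrableOn (fun _ : ℝ => f k) (Set.Ioc b (b + 1)) := by
      exact integrableOn_const (by rw [hμ]; exact ENNReal.one_ne_top)
    have hconst : (∫ _ in Set.Ioc b (b + 1), f k) = f k := by
      rw [setIntegral_const, Measure.real, hμ]
      simp
    have h_eq : (∫ z in Set.Ioc b (b + 1), (f k - f z)) = f k - ∫ z in Set.Ioc b (b + 1), f z := by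
      rw [integral_sub hconstI hfI, hconst]
    have habs : |f k - ∫ z in Set.Ioc b (b + 1), f z|
        ≤ ∫ z in Set.Ioc b (b + 1), |f k - f z| := by
      rw [← h_eq]
      simpa [Real.norm_eq_abs] using
        norm_integral_le_integral_norm (μ := volume.restrict (Set.Ioc b (b + 1)))
          (fun z => f k - f z)
    have hmono : (∫ z in Set.Ioc b (b + 1), |f k - f z|)
        ≤ ∫ z in Set.Ioc b (b + 1), C * |z - k| := by
      apply setIntegral_mono_on ((hconstI.sub hfI).abs)
        (((continuous_const.mul (continuous_abs.comp
          (continuous_id.sub continuous_const))).integrableOn_Ioc))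
        measurableSet_Ioc
      intro z hz
      simp only [Pi.sub_apply, Function.comp_apply, id_eq]
      rw [abs_sub_comm]
      exact hlip z (Set.Ioc_subset_Icc_self hz)
    have hfin : (∫ z in Set.Ioc b (b + 1), C * |z - k|) ≤ C * (1 / 2) := by
      rw [integral_const_mul]
      exact mul_le_mul_of_nonneg_left (absIntLe b k hbk.le hkb1) hCnn
    calc |f ((m : ℝ) + 1 + (j : ℝ)) - ∫ z in Set.Ioc b (b + 1), f z|
        = |f k - ∫ z in Set.Ioc b (b + 1), f z| := by rw [hk_def]
      _ ≤ ∫ z in Set.Ioc b (b + 1), |f k - f z| := habs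
      _ ≤ ∫ z in Set.Ioc b (b + 1), C * |z - k| := hmono
      _ ≤ C * (1 / 2) := hfin
      _ = (Real.pi + 4 * r) * x * ((j : ℝ) + 1) ^ (-(2 * r)) := by rw [hC_def]; ring

  -- final assembly
  have hS1 : Summable (fun j : ℕ => f ((m : ℝ) + 1 + (j : ℝ))) :=
    (((summable_nat_add_iff (m + 1)).2 hgsum).congr hgF)
  have hdiff : HasSum (fun j : ℕ => f ((m : ℝ) + 1 + (j : ℝ))
      - ∫ z in Set.Ioc (a + (j : ℝ)) (a + (j : ℝ) + 1), f z)
      ((∑' j : ℕ, f ((m : ℝ) + 1 + (j : ℝ))) - ∫ z in Set.Ioi a, f z) :=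
    hS1.hasSum.sub hhs_int
  have hBsum : HasSum (fun j : ℕ => (Real.pi + 4 * r) * x * ((j : ℝ) + 1) ^ (-(2 * r)))
      ((Real.pi + 4 * r) * x * ∑' j : ℕ, ((j : ℝ) + 1) ^ (-(2 * r))) :=
    hZsum.hasSum.mul_left _
  have hfinal : |(∑' j : ℕ, f ((m : ℝ) + 1 + (j : ℝ))) - ∫ z in Set.Ioi a, f z|
      ≤ (Real.pi + 4 * r) * x * ∑' j : ℕ, ((j : ℝ) + 1) ^ (-(2 * r)) := by
    rw [← hdiff.tsum_eq]
    exact tsum_of_norm_bounded hBsum (fun j => by rw [Real.norm_eq_abs]; exact hest j)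
  have hLHS : (∑' k : ℕ, if a < (k : ℝ) then
      (k : ℝ) ^ (-(2 * r)) * Real.cos (2 * Real.pi * (k : ℝ) * x) else 0)
      = ∑' j : ℕ, f ((m : ℝ) + 1 + (j : ℝ)) := hA
  rw [hLHS]
  calc |(∑' j : ℕ, f ((m : ℝ) + 1 + (j : ℝ))) - ∫ z in Set.Ioi a, f z|
      ≤ (Real.pi + 4 * r) * x * ∑' j : ℕ, ((j : ℝ) + 1) ^ (-(2 * r)) := hfinal
  _ = (Real.pi + 4 * r) * (∑' k : ℕ, ((k : ℝ) + 1) ^ (-(2 * r))) * x := by ring
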